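/- arXiv:2508.06865 — 2 statements merged into one kernel-verified Lean document; each statement's English description precedes it below -/
import Mathlib

section
/- Let g₀ be a finite-dimensional semisimple real Lie algebra and ρ : g₀ → gl(V₀) an irreducible real representation on a nonzero finite-dimensional real vector space V₀ (the only ℝ-subspaces of V₀ invariant under all ρ(x), x ∈ g₀, are 0 and V₀). Then exactly one of the following holds: (1) ρ admits no invariant complex structure, and in this case the complexified representation of g₀ on V₀ ⊗_ℝ ℂ (acting by ρ(x) ⊗ 1) is irreducible as a complex representation and admits an invariant real structure; (2) ρ admits an invariant complex structure J, and in this case V₀ equipped with the complex scalar multiplication determined by J is an irreducible complex representation of g₀ that admits no invariant real structure. Conversely, any finite-dimensional real representation of g₀ satisfying either condition (1) or condition (2) is irreducible. -/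
open TensorProduct

attribute [local instance 100] LieRing.ofAssociativeRing

section

variable {g₀ V₀ : Type*} [LieRing g₀] [LieAlgebra ℝ g₀] [AddCommGroup V₀] [Module ℝ V₀]

/-- The real representation `ρ` is irreducible: the only invariant ℝ-subspaces are `0`
and `V₀`. -/
def RealIrreducible (ρ : g₀ →ₗ⁅ℝ⁆ Module.End ℝ V₀) : Prop :=
  ∀ W : Submodule ℝ V₀, (∀ x : g₀, ∀ v ∈ W, ρ x v ∈ W) → W = ⊥ ∨ W = ⊤

/-- `J` is an invariant complex structure for `ρ`: an ℝ-linear map with `J² = -id`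
commuting with every `ρ(x)`. -/
def IsInvariantComplexStructure (ρ : g₀ →ₗ⁅ℝ⁆ Module.End ℝ V₀) (J : V₀ →ₗ[ℝ] V₀) : Prop :=
  J ∘ₗ J = -LinearMap.id ∧ ∀ x : g₀, J ∘ₗ ρ x = ρ x ∘ₗ J

/-- Case (1): `ρ` admits no invariant complex structure; the complexified
representation on `ℂ ⊗[ℝ] V₀` (acting by `ρ(x) ⊗ 1`) is irreducible as a complex
representation and admits an invariant real structure (an ℝ-linear, antilinear,
involutive map commuting with the action). -/
def CondOne (ρ : g₀ →ₗ⁅ℝ⁆ Module.End ℝ V₀) : Prop :=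
  (¬ ∃ J : V₀ →ₗ[ℝ] V₀, IsInvariantComplexStructure ρ J) ∧
  (∀ W : Submodule ℂ (ℂ ⊗[ℝ] V₀),
    (∀ x : g₀, ∀ v ∈ W, (ρ x).baseChange ℂ v ∈ W) → W = ⊥ ∨ W = ⊤) ∧
  (∃ S : (ℂ ⊗[ℝ] V₀) →ₗ[ℝ] (ℂ ⊗[ℝ] V₀),
    (∀ (c : ℂ) (v : ℂ ⊗[ℝ] V₀), S (c • v) = (starRingEnd ℂ) c • S v) ∧
    (∀ v, S (S v) = v) ∧
    (∀ (x : g₀) (v : ℂ ⊗[ℝ] V₀), S ((ρ x).baseChange ℂ v) = (ρ x).baseChange ℂ (S v)))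

/-- Case (2): `ρ` admits an invariant complex structure `J`, and `V₀` equipped with the
complex scalar multiplication determined by `J` is an irreducible complex representation
of `g₀` (the invariant subspaces which are moreover `J`-stable, i.e. ℂ-subspaces, are
only `0` and `V₀`) admitting no invariant real structure (no ℝ-linear involution
anticommuting with `J` — i.e. antilinear — commutes with every `ρ(x)`). -/
def CondTwo (ρ : g₀ →ₗ⁅ℝ⁆ Module.End ℝ V₀) : Prop :=
  ∃ J : V₀ →ₗ[ℝ] V₀, IsInvariantComplexStructure ρ J ∧
    (∀ W : Submodule ℝ V₀, (∀ v ∈ W, J v ∈ W) →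
      (∀ x : g₀, ∀ v ∈ W, ρ x v ∈ W) → W = ⊥ ∨ W = ⊤) ∧
    ¬ ∃ S : V₀ →ₗ[ℝ] V₀, S ∘ₗ J = -(J ∘ₗ S) ∧ (∀ v, S (S v) = v) ∧
      ∀ x : g₀, S ∘ₗ ρ x = ρ x ∘ₗ S

end


namespace Stmt3Aux

variable {V₀ : Type*} [AddCommGroup V₀] [Module ℝ V₀]

noncomputable def rmap (V₀ : Type*) [AddCommGroup V₀] [Module ℝ V₀] :
    (ℂ ⊗[ℝ] V₀) →ₗ[ℝ] V₀ :=
  TensorProduct.lift ((LinearMap.lsmul ℝ V₀) ∘ₗ Complex.reLm)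

noncomputable def qmap (V₀ : Type*) [AddCommGroup V₀] [Module ℝ V₀] :
    (ℂ ⊗[ℝ] V₀) →ₗ[ℝ] V₀ :=
  TensorProduct.lift ((LinearMap.lsmul ℝ V₀) ∘ₗ Complex.imLm)

noncomputable def Smap (V₀ : Type*) [AddCommGroup V₀] [Module ℝ V₀] :
    (ℂ ⊗[ℝ] V₀) →ₗ[ℝ] (ℂ ⊗[ℝ] V₀) :=
  LinearMap.rTensor V₀ (Complex.conjAe.toLinearMap.restrictScalars ℝ)

noncomputable def iota (V₀ : Type*) [AddCommGroup V₀] [Module ℝ V₀] :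
    V₀ →ₗ[ℝ] (ℂ ⊗[ℝ] V₀) := TensorProduct.mk ℝ ℂ V₀ 1

@[simp] lemma rmap_tmul (c : ℂ) (v : V₀) : rmap V₀ (c ⊗ₜ v) = c.re • v := by simp [rmap]
@[simp] lemma qmap_tmul (c : ℂ) (v : V₀) : qmap V₀ (c ⊗ₜ v) = c.im • v := by simp [qmap]
@[simp] lemma Smap_tmul (c : ℂ) (v : V₀) :
    Smap V₀ (c ⊗ₜ v) = (starRingEnd ℂ) c ⊗ₜ v := by simp [Smap]
@[simp] lemma iota_apply (v : V₀) : iota V₀ v = (1 : ℂ) ⊗ₜ v := rfl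

@[simp] lemma rmap_iota (v : V₀) : rmap V₀ (iota V₀ v) = v := by simp
@[simp] lemma qmap_iota (v : V₀) : qmap V₀ (iota V₀ v) = 0 := by simp
@[simp] lemma Smap_iota (v : V₀) : Smap V₀ (iota V₀ v) = iota V₀ v := by simp

lemma Smap_smul (c : ℂ) (z : ℂ ⊗[ℝ] V₀) :
    Smap V₀ (c • z) = (starRingEnd ℂ) c • Smap V₀ z := by
  induction z using TensorProduct.induction_on with
  | zero => simp
  | tmul a v => simp [smul_tmul', map_mul]
  | add x y hx hy => simp [smul_add, hx, hy]

@[simp] lemma Smap_Smap (z : ℂ ⊗[ℝ] V₀) : Smap V₀ (Smap V₀ z) = z := by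
  induction z using TensorProduct.induction_on with
  | zero => simp
  | tmul a v => simp
  | add x y hx hy => simp [hx, hy]

lemma Smap_baseChange (f : V₀ →ₗ[ℝ] V₀) (z : ℂ ⊗[ℝ] V₀) :
    Smap V₀ (f.baseChange ℂ z) = f.baseChange ℂ (Smap V₀ z) := by
  induction z using TensorProduct.induction_on with
  | zero => simp
  | tmul a v => simp
  | add x y hx hy => simp [hx, hy]

lemma rmap_baseChange (f : V₀ →ₗ[ℝ] V₀) (z : ℂ ⊗[ℝ] V₀) :
    rmap V₀ (f.baseChange ℂ z) = f (rmap V₀ z) := by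
  induction z using TensorProduct.induction_on with
  | zero => simp
  | tmul a v => simp
  | add x y hx hy => simp [hx, hy]

lemma decomp (z : ℂ ⊗[ℝ] V₀) :
    z = iota V₀ (rmap V₀ z) + Complex.I • iota V₀ (qmap V₀ z) := by
  induction z using TensorProduct.induction_on with
  | zero => simp
  | tmul a v =>
      simp only [rmap_tmul, qmap_tmul, iota_apply, tmul_smul]
      rw [smul_tmul', smul_tmul', smul_tmul', ← TensorProduct.add_tmul]
      congr 1
      simp [Complex.ext_iff]
  | add x y hx hy =>
      calc x + y = ((iota V₀) ((rmap V₀) x) + Complex.I • (iota V₀) ((qmap V₀) x))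
            + ((iota V₀) ((rmap V₀) y) + Complex.I • (iota V₀) ((qmap V₀) y)) := by
              rw [← hx, ← hy]
        _ = _ := by rw [map_add, map_add, map_add, map_add, smul_add]; abel

lemma rmap_Smap (z : ℂ ⊗[ℝ] V₀) : rmap V₀ (Smap V₀ z) = rmap V₀ z := by
  induction z using TensorProduct.induction_on with
  | zero => simp
  | tmul a v => simp
  | add x y hx hy => simp [hx, hy]

lemma qmap_Smap (z : ℂ ⊗[ℝ] V₀) : qmap V₀ (Smap V₀ z) = -qmap V₀ z := by
  induction z using TensorProduct.induction_on with
  | zero => simp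
  | tmul a v => simp
  | add x y hx hy => simp [hx, hy]; abel

lemma eq_iota_of_fixed {z : ℂ ⊗[ℝ] V₀} (h : Smap V₀ z = z) : z = iota V₀ (rmap V₀ z) := by
  have hneg : qmap V₀ z = -qmap V₀ z := by
    conv_lhs => rw [← h, qmap_Smap]
  have h2 : (2 : ℝ) • qmap V₀ z = 0 := by
    rw [two_smul]
    nth_rewrite 2 [hneg]
    simp
  have hq : qmap V₀ z = 0 := by
    rcases smul_eq_zero.mp h2 with h' | h'
    · norm_num at h'
    · exact h'
  conv_lhs => rw [decomp z, hq]
  simp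

end Stmt3Aux
namespace Stmt3Aux
variable {g₀ V₀ : Type*} [LieRing g₀] [LieAlgebra ℝ g₀] [AddCommGroup V₀] [Module ℝ V₀]

/-- The conjugate of a complex submodule of `ℂ ⊗[ℝ] V₀`. -/
noncomputable def conjSub (W : Submodule ℂ (ℂ ⊗[ℝ] V₀)) : Submodule ℂ (ℂ ⊗[ℝ] V₀) where
  carrier := {u | Smap V₀ u ∈ W}
  add_mem' := by intro a b ha hb; simpa [map_add] using W.add_mem ha hb
  zero_mem' := by simp
  smul_mem' := by
    intro c u hu
    have : Smap V₀ (c • u) = (starRingEnd ℂ) c • Smap V₀ u := Smap_smul c u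
    simpa [this] using W.smul_mem _ hu

@[simp] lemma mem_conjSub {W : Submodule ℂ (ℂ ⊗[ℝ] V₀)} {u : ℂ ⊗[ℝ] V₀} :
    u ∈ conjSub W ↔ Smap V₀ u ∈ W := Iff.rfl

/-- An `S`-stable invariant complex submodule is trivial when `ρ` is irreducible. -/
lemma sStable_trivial {ρ : g₀ →ₗ⁅ℝ⁆ Module.End ℝ V₀}
    (hirr : ∀ W : Submodule ℝ V₀, (∀ x : g₀, ∀ v ∈ W, ρ x v ∈ W) → W = ⊥ ∨ W = ⊤)
    (U : Submodule ℂ (ℂ ⊗[ℝ] V₀))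
    (hinv : ∀ x : g₀, ∀ v ∈ U, (ρ x).baseChange ℂ v ∈ U)
    (hS : ∀ u ∈ U, Smap V₀ u ∈ U) : U = ⊥ ∨ U = ⊤ := by
  set U₀ : Submodule ℝ V₀ :=
    { carrier := {v | iota V₀ v ∈ U}
      add_mem' := fun ha hb => by simpa [map_add, TensorProduct.tmul_add] using U.add_mem ha hb
      zero_mem' := by simp
      smul_mem' := fun r v hv => by
        show iota V₀ (r • v) ∈ U; rw [map_smul]; exact U.smul_of_tower_mem r hv } with hU₀
  have hU₀mem : ∀ v : V₀, v ∈ U₀ ↔ iota V₀ v ∈ U := fun v => Iff.rfl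
  have hU₀inv : ∀ x : g₀, ∀ v ∈ U₀, ρ x v ∈ U₀ := by
    intro x v hv
    have : (ρ x).baseChange ℂ (iota V₀ v) = iota V₀ (ρ x v) := by simp
    simpa [hU₀mem, ← this] using hinv x _ hv
  rcases hirr U₀ hU₀inv with h | h
  · left
    rw [eq_bot_iff]
    intro u hu
    -- u + S u is fixed, lies in U; i•u similarly
    have h1 : Smap V₀ (u + Smap V₀ u) = u + Smap V₀ u := by simp [map_add]; abel
    have hu1 : u + Smap V₀ u ∈ U := U.add_mem hu (hS u hu)
    have e1 : u + Smap V₀ u = iota V₀ (rmap V₀ (u + Smap V₀ u)) := eq_iota_of_fixed h1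
    have hz1 : rmap V₀ (u + Smap V₀ u) ∈ U₀ := by rw [hU₀mem, ← e1]; exact hu1
    rw [h] at hz1
    have e1' : u + Smap V₀ u = 0 := by
      rw [e1, (Submodule.mem_bot ℝ).mp hz1, map_zero]
    have hiu : Complex.I • u ∈ U := U.smul_mem _ hu
    have h2 : Smap V₀ (Complex.I • u + Smap V₀ (Complex.I • u))
        = Complex.I • u + Smap V₀ (Complex.I • u) := by simp [map_add]; abel
    have hu2 : Complex.I • u + Smap V₀ (Complex.I • u) ∈ U :=
      U.add_mem hiu (hS _ hiu)
    have e2 : Complex.I • u + Smap V₀ (Complex.I • u)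
        = iota V₀ (rmap V₀ (Complex.I • u + Smap V₀ (Complex.I • u))) := eq_iota_of_fixed h2
    have hz2 : rmap V₀ (Complex.I • u + Smap V₀ (Complex.I • u)) ∈ U₀ := by
      rw [hU₀mem, ← e2]; exact hu2
    rw [h] at hz2
    have e2' : Complex.I • u + Smap V₀ (Complex.I • u) = 0 := by
      rw [e2, (Submodule.mem_bot ℝ).mp hz2, map_zero]
    -- from e2' : I•u = -S(I•u) = -conj(I)•S u = I • S u, hence u = S u
    have e3 : Smap V₀ (Complex.I • u) = Complex.I • (- Smap V₀ u) := by
      rw [Smap_smul]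
      simp [Complex.conj_I]
    rw [e3] at e2'
    have e4 : Complex.I • (u - Smap V₀ u) = 0 := by
      rw [smul_sub]; rw [← sub_neg_eq_add] at e2'
      simpa [smul_neg, sub_neg_eq_add] using e2'
    have e5 : u = Smap V₀ u := by
      have := smul_eq_zero.mp e4
      rcases this with h' | h'
      · exact absurd h' Complex.I_ne_zero
      · exact sub_eq_zero.mp h'
    have : u + u = 0 := by rw [← e5] at e1'; exact e1'
    have h2u : (2 : ℂ) • u = 0 := by rw [two_smul]; exact this
    rcases smul_eq_zero.mp h2u with h' | h'
    · norm_num at h'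
    · simpa using h'
  · right
    rw [eq_top_iff]
    intro z _
    induction z using TensorProduct.induction_on with
    | zero => exact U.zero_mem
    | tmul c v =>
        have hv : iota V₀ v ∈ U := by
          have : v ∈ U₀ := by rw [h]; trivial
          exact this
        have := U.smul_mem c hv
        simpa [smul_tmul'] using this
    | add x y hx hy => exact U.add_mem (hx trivial) (hy trivial)


variable {ρ : g₀ →ₗ⁅ℝ⁆ Module.End ℝ V₀}

set_option maxHeartbeats 1000000 in
lemma key_lemma (hirr : ∀ W : Submodule ℝ V₀, (∀ x : g₀, ∀ v ∈ W, ρ x v ∈ W) → W = ⊥ ∨ W = ⊤)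
    (W : Submodule ℂ (ℂ ⊗[ℝ] V₀))
    (hWinv : ∀ x : g₀, ∀ v ∈ W, (ρ x).baseChange ℂ v ∈ W) :
    (W = ⊥ ∨ W = ⊤) ∨ ∃ J : V₀ →ₗ[ℝ] V₀,
      (J ∘ₗ J = -LinearMap.id ∧ ∀ x : g₀, J ∘ₗ ρ x = ρ x ∘ₗ J) := by
  classical
  set SW := conjSub (V₀ := V₀) W with hSW
  have hSWinv : ∀ x : g₀, ∀ v ∈ SW, (ρ x).baseChange ℂ v ∈ SW := by
    intro x v hv
    rw [mem_conjSub, Smap_baseChange]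
    exact hWinv x _ hv
  have hA := sStable_trivial hirr (W ⊓ SW)
    (fun x v hv => ⟨hWinv x v hv.1, hSWinv x v hv.2⟩)
    (fun u hu => ⟨hu.2, show Smap V₀ u ∈ SW from
      mem_conjSub.mpr (by rw [Smap_Smap]; exact hu.1)⟩)
  have hB := sStable_trivial hirr (W ⊔ SW)
    (by
      intro x v hv
      rcases Submodule.mem_sup.mp hv with ⟨a, ha, b, hb, rfl⟩
      rw [map_add]
      exact Submodule.add_mem _ (Submodule.mem_sup_left (hWinv x a ha))
        (Submodule.mem_sup_right (hSWinv x b hb)))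
    (by
      intro u hu
      rcases Submodule.mem_sup.mp hu with ⟨a, ha, b, hb, rfl⟩
      rw [map_add]
      refine Submodule.add_mem _ (Submodule.mem_sup_right ?_) (Submodule.mem_sup_left ?_)
      · exact mem_conjSub.mpr (by rw [Smap_Smap]; exact ha)
      · exact hb)
  rcases hA with hA | hA
  · rcases hB with hB | hB
    · left; left
      rw [eq_bot_iff, ← hB]
      exact le_sup_left
    · -- IsCompl: build J
      right
      have hcompl : IsCompl W SW := ⟨disjoint_iff.mpr hA, codisjoint_iff.mpr hB⟩
      set π := W.projectionOnto SW hcompl with hπ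
      have hπW : ∀ u : ℂ ⊗[ℝ] V₀, ∀ hu : u ∈ W, (↑(π u) : ℂ ⊗[ℝ] V₀) = u := by
        intro u hu
        have := Submodule.projectionOnto_apply_left hcompl ⟨u, hu⟩
        rw [hπ]; rw [this]
      have hπSW : ∀ u ∈ SW, π u = 0 := fun u hu =>
        Submodule.projectionOnto_apply_of_mem_right hcompl hu
      have hker : ∀ z : ℂ ⊗[ℝ] V₀, z - ↑(π z) ∈ SW := by
        intro z
        rw [← Submodule.projectionOnto_apply_eq_zero_iff (h := hcompl), map_sub]
        rw [show (π (↑(π z) : ℂ ⊗[ℝ] V₀)) = π z from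
          Submodule.projectionOnto_apply_left hcompl (π z), sub_self]
      have key : ∀ z : ℂ ⊗[ℝ] V₀, Smap V₀ z = z →
          z = ↑(π z) + Smap V₀ ↑(π z) := by
        intro z hz
        set a : ℂ ⊗[ℝ] V₀ := ↑(π z) with ha
        have haW : a ∈ W := (π z).2
        have hb : z - a ∈ SW := hker z
        have hsa : Smap V₀ a ∈ SW := mem_conjSub.mpr (by rw [Smap_Smap]; exact haW)
        have hsb : Smap V₀ (z - a) ∈ W := hb
        have hz2 : z = Smap V₀ a + Smap V₀ (z - a) := by
          conv_lhs => rw [← hz]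
          rw [map_sub]; abel
        have hd : a - Smap V₀ (z - a) ∈ W ⊓ SW := by
          constructor
          · exact W.sub_mem haW hsb
          · have he : a - Smap V₀ (z - a) = Smap V₀ a - (z - a) := by
              rw [sub_eq_sub_iff_add_eq_add, ← hz2]
              abel
            rw [he]
            exact SW.sub_mem hsa hb
        rw [hA, Submodule.mem_bot] at hd
        have hfin : Smap V₀ (z - a) = a := (sub_eq_zero.mp hd).symm
        rw [hz2, hfin, add_comm]
      -- the complex structure
      have hsmul : ∀ (r : ℝ) (v : V₀),
          (↑(π (iota V₀ (r • v))) : ℂ ⊗[ℝ] V₀) = r • ↑(π (iota V₀ v)) := by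
        intro r v
        rw [map_smul, LinearMap.map_smul_of_tower, Submodule.coe_smul_of_tower]
      set Jmap : V₀ →ₗ[ℝ] V₀ := {
        toFun := fun v => rmap V₀ (Complex.I • (↑(π (iota V₀ v)) : ℂ ⊗[ℝ] V₀)
          + Smap V₀ (Complex.I • ↑(π (iota V₀ v))))
        map_add' := by
          intro v w
          simp only [map_add, Submodule.coe_add, smul_add]
          abel
        map_smul' := by
          intro r v
          simp only [RingHom.id_apply, hsmul]
          rw [smul_comm Complex.I r, map_smul, ← smul_add, map_smul] } with hJmap
      have hJapp : ∀ v : V₀, Jmap v = rmap V₀ (Complex.I • (↑(π (iota V₀ v)) : ℂ ⊗[ℝ] V₀)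
          + Smap V₀ (Complex.I • ↑(π (iota V₀ v)))) := fun v => rfl
      -- canonical decomposition of iota (Jmap v)
      have hφJ : ∀ v : V₀, (↑(π (iota V₀ (Jmap v))) : ℂ ⊗[ℝ] V₀)
          = Complex.I • ↑(π (iota V₀ v)) := by
        intro v
        set a : ℂ ⊗[ℝ] V₀ := ↑(π (iota V₀ v)) with ha
        have haW : a ∈ W := (π _).2
        set z' : ℂ ⊗[ℝ] V₀ := Complex.I • a + Smap V₀ (Complex.I • a) with hz'
        have hz'fix : Smap V₀ z' = z' := by
          rw [hz', map_add, Smap_Smap]; abel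
        have hiJ : iota V₀ (Jmap v) = z' := by
          rw [hJapp v, ← ha, ← hz']
          exact (eq_iota_of_fixed hz'fix).symm
        rw [hiJ, hz', map_add]
        have h1 : (↑(π (Complex.I • a)) : ℂ ⊗[ℝ] V₀) = Complex.I • a :=
          hπW _ (W.smul_mem _ haW)
        have h2 : π (Smap V₀ (Complex.I • a)) = 0 :=
          hπSW _ (mem_conjSub.mpr (by rw [Smap_Smap]; exact W.smul_mem _ haW))
        rw [h2, add_zero, h1]
      refine ⟨Jmap, ?_, ?_⟩
      · -- J ∘ J = -id
        ext v
        simp only [LinearMap.comp_apply, LinearMap.neg_apply, LinearMap.id_apply]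
        rw [hJapp (Jmap v), hφJ v]
        have : Complex.I • Complex.I • (↑(π (iota V₀ v)) : ℂ ⊗[ℝ] V₀)
            = -↑(π (iota V₀ v)) := by
          rw [smul_smul, Complex.I_mul_I, neg_one_smul]
        rw [this, map_neg, ← neg_add, map_neg]
        congr 1
        rw [← key (iota V₀ v) (Smap_iota v), rmap_iota]
      · -- J commutes with ρ x
        intro x
        have hπB : ∀ z : ℂ ⊗[ℝ] V₀,
            (↑(π ((ρ x).baseChange ℂ z)) : ℂ ⊗[ℝ] V₀) = (ρ x).baseChange ℂ ↑(π z) := by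
          intro z
          have hdec : (ρ x).baseChange ℂ z
              = (ρ x).baseChange ℂ ↑(π z) + (ρ x).baseChange ℂ (z - ↑(π z)) := by
            rw [← map_add]; congr 1; abel
          rw [hdec, map_add]
          have h1 : (↑(π ((ρ x).baseChange ℂ (↑(π z) : ℂ ⊗[ℝ] V₀))) : ℂ ⊗[ℝ] V₀)
              = (ρ x).baseChange ℂ ↑(π z) := hπW _ (hWinv x _ (π z).2)
          have h2 : π ((ρ x).baseChange ℂ (z - ↑(π z))) = 0 :=
            hπSW _ (hSWinv x _ (hker z))
          rw [h2, add_zero, h1]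
        ext v
        simp only [LinearMap.comp_apply]
        rw [hJapp (ρ x v), hJapp v]
        have hi : iota V₀ (ρ x v) = (ρ x).baseChange ℂ (iota V₀ v) := by simp
        rw [hi, hπB]
        rw [show Complex.I • (ρ x).baseChange ℂ (↑(π (iota V₀ v)) : ℂ ⊗[ℝ] V₀)
            = (ρ x).baseChange ℂ (Complex.I • ↑(π (iota V₀ v))) from (map_smul _ _ _).symm]
        rw [Smap_baseChange, ← map_add, rmap_baseChange]
  · left; right
    rw [eq_top_iff, ← hA]
    exact inf_le_left


lemma rmap_csmul (c : ℂ) (z : ℂ ⊗[ℝ] V₀) :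
    rmap V₀ (c • z) = c.re • rmap V₀ z - c.im • qmap V₀ z := by
  induction z using TensorProduct.induction_on with
  | zero => simp
  | tmul a v =>
      simp [smul_tmul', Complex.mul_re, sub_smul, mul_smul]
  | add x y hx hy =>
      simp only [smul_add, map_add, hx, hy]; abel

lemma qmap_csmul (c : ℂ) (z : ℂ ⊗[ℝ] V₀) :
    qmap V₀ (c • z) = c.im • rmap V₀ z + c.re • qmap V₀ z := by
  induction z using TensorProduct.induction_on with
  | zero => simp
  | tmul a v =>
      simp [smul_tmul', Complex.mul_im, add_smul, mul_smul]
      rw [add_comm]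
  | add x y hx hy =>
      simp only [smul_add, map_add, hx, hy]; abel

/-- Converse for condition (1). -/
lemma real_irr_of_complex_irr {ρ : g₀ →ₗ⁅ℝ⁆ Module.End ℝ V₀}
    (hC : ∀ W : Submodule ℂ (ℂ ⊗[ℝ] V₀),
      (∀ x : g₀, ∀ v ∈ W, (ρ x).baseChange ℂ v ∈ W) → W = ⊥ ∨ W = ⊤) :
    ∀ W : Submodule ℝ V₀, (∀ x : g₀, ∀ v ∈ W, ρ x v ∈ W) → W = ⊥ ∨ W = ⊤ := by
  intro W hWinv
  set W' := Submodule.span ℂ (iota V₀ '' (W : Set V₀)) with hW'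
  have hW'inv : ∀ x : g₀, ∀ v ∈ W', (ρ x).baseChange ℂ v ∈ W' := by
    intro x v hv
    have hle : W' ≤ Submodule.comap ((ρ x).baseChange ℂ) W' := by
      rw [hW', Submodule.span_le]
      rintro _ ⟨w, hw, rfl⟩
      have : (ρ x).baseChange ℂ (iota V₀ w) = iota V₀ (ρ x w) := by simp
      simp only [SetLike.mem_coe, Submodule.mem_comap, this]
      exact Submodule.subset_span ⟨ρ x w, hWinv x w hw, rfl⟩
    exact hle hv
  rcases hC W' hW'inv with h | h
  · left
    rw [eq_bot_iff]
    intro w hw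
    have : iota V₀ w ∈ W' := Submodule.subset_span ⟨w, hw, rfl⟩
    rw [h, Submodule.mem_bot] at this
    have := congrArg (rmap V₀) this
    simpa using this
  · right
    rw [eq_top_iff]
    intro v _
    set U : Submodule ℂ (ℂ ⊗[ℝ] V₀) :=
      { carrier := {z | rmap V₀ z ∈ W ∧ qmap V₀ z ∈ W}
        add_mem' := fun ha hb => ⟨by rw [map_add]; exact W.add_mem ha.1 hb.1,
          by rw [map_add]; exact W.add_mem ha.2 hb.2⟩
        zero_mem' := by simp
        smul_mem' := fun c z hz => ⟨by
            rw [rmap_csmul]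
            exact W.sub_mem (W.smul_mem _ hz.1) (W.smul_mem _ hz.2),
          by
            rw [qmap_csmul]
            exact W.add_mem (W.smul_mem _ hz.1) (W.smul_mem _ hz.2)⟩ } with hU
    have hle : W' ≤ U := by
      rw [hW', Submodule.span_le]
      rintro _ ⟨w, hw, rfl⟩
      exact ⟨by simpa using hw, by simp⟩
    have : iota V₀ v ∈ U := hle (by rw [h]; trivial)
    simpa using this.1

/-- Converse for condition (2). -/
lemma real_irr_of_J {ρ : g₀ →ₗ⁅ℝ⁆ Module.End ℝ V₀} (J : V₀ →ₗ[ℝ] V₀)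
    (hJ2 : J ∘ₗ J = -LinearMap.id) (hJρ : ∀ x : g₀, J ∘ₗ ρ x = ρ x ∘ₗ J)
    (hcplx : ∀ W : Submodule ℝ V₀, (∀ v ∈ W, J v ∈ W) →
      (∀ x : g₀, ∀ v ∈ W, ρ x v ∈ W) → W = ⊥ ∨ W = ⊤)
    (hnoS : ¬ ∃ S : V₀ →ₗ[ℝ] V₀, S ∘ₗ J = -(J ∘ₗ S) ∧ (∀ v, S (S v) = v) ∧
      ∀ x : g₀, S ∘ₗ ρ x = ρ x ∘ₗ S) :
    ∀ W : Submodule ℝ V₀, (∀ x : g₀, ∀ v ∈ W, ρ x v ∈ W) → W = ⊥ ∨ W = ⊤ := by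
  have hJJ : ∀ v : V₀, J (J v) = -v := by
    intro v
    have := LinearMap.ext_iff.mp hJ2 v
    simpa using this
  have hJρ' : ∀ (x : g₀) (v : V₀), J (ρ x v) = ρ x (J v) := by
    intro x v
    have := LinearMap.ext_iff.mp (hJρ x) v
    simpa using this
  intro W hWinv
  set WJ := W.map J with hWJ
  have hWJmem : ∀ v : V₀, v ∈ WJ ↔ ∃ w ∈ W, J w = v := fun v => Submodule.mem_map
  have hWJinv : ∀ x : g₀, ∀ v ∈ WJ, ρ x v ∈ WJ := by
    intro x v hv
    rcases hWJmem v |>.mp hv with ⟨w, hw, rfl⟩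
    exact hWJmem _ |>.mpr ⟨ρ x w, hWinv x w hw, hJρ' x w⟩
  have hM := hcplx (W ⊓ WJ)
    (by
      rintro v ⟨hv1, hv2⟩
      rcases hWJmem v |>.mp hv2 with ⟨w, hw, rfl⟩
      constructor
      · rw [hJJ]; exact W.neg_mem hw
      · exact hWJmem _ |>.mpr ⟨J w, hv1, rfl⟩)
    (fun x v hv => ⟨hWinv x v hv.1, hWJinv x v hv.2⟩)
  have hT := hcplx (W ⊔ WJ)
    (by
      intro v hv
      rcases Submodule.mem_sup.mp hv with ⟨a, ha, b, hb, rfl⟩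
      rcases hWJmem b |>.mp hb with ⟨w, hw, rfl⟩
      rw [map_add, hJJ]
      exact Submodule.add_mem _ (Submodule.mem_sup_right (hWJmem _ |>.mpr ⟨a, ha, rfl⟩))
        (Submodule.mem_sup_left (W.neg_mem hw)))
    (by
      intro x v hv
      rcases Submodule.mem_sup.mp hv with ⟨a, ha, b, hb, rfl⟩
      rw [map_add]
      exact Submodule.add_mem _ (Submodule.mem_sup_left (hWinv x a ha))
        (Submodule.mem_sup_right (hWJinv x b hb)))
  rcases hM with hM | hM
  · rcases hT with hT | hT
    · left
      rw [eq_bot_iff, ← hT]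
      exact le_sup_left
    · -- complement case: construct a real structure, contradiction
      exfalso
      apply hnoS
      have hcompl : IsCompl W WJ := ⟨disjoint_iff.mpr hM, codisjoint_iff.mpr hT⟩
      set π := W.projectionOnto WJ hcompl with hπ
      have hπW : ∀ u : V₀, ∀ hu : u ∈ W, (↑(π u) : V₀) = u := by
        intro u hu
        have := Submodule.projectionOnto_apply_left hcompl ⟨u, hu⟩
        rw [hπ]; rw [this]
      have hπWJ : ∀ u ∈ WJ, π u = 0 := fun u hu =>
        Submodule.projectionOnto_apply_of_mem_right hcompl hu
      have hker : ∀ v : V₀, v - ↑(π v) ∈ WJ := by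
        intro v
        rw [← Submodule.projectionOnto_apply_eq_zero_iff (h := hcompl), map_sub]
        rw [show (π (↑(π v) : V₀)) = π v from
          Submodule.projectionOnto_apply_left hcompl (π v), sub_self]
      set Sm : V₀ →ₗ[ℝ] V₀ := (2 : ℝ) • (W.subtype ∘ₗ π) - LinearMap.id with hSm
      have hSapp : ∀ v : V₀, Sm v = (2 : ℝ) • (↑(π v) : V₀) - v := by
        intro v; simp [hSm]
      have hC : ∀ v : V₀, (↑(π (J v)) : V₀) = J v - J ↑(π v) := by
        intro v
        have hdec : J v = J ↑(π v) + J (v - ↑(π v)) := by rw [← map_add]; congr 1; abel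
        rcases hWJmem _ |>.mp (hker v) with ⟨w, hw, hwe⟩
        have h1 : π (J (↑(π v) : V₀)) = 0 :=
          hπWJ _ (hWJmem _ |>.mpr ⟨↑(π v), (π v).2, rfl⟩)
        have h2 : (↑(π (J (v - ↑(π v)))) : V₀) = J (v - ↑(π v)) := by
          apply hπW
          rw [← hwe, hJJ]
          exact W.neg_mem hw
        rw [hdec, map_add, Submodule.coe_add, h1, h2]
        simp [map_sub]
      have hπρ : ∀ (x : g₀) (v : V₀), (↑(π (ρ x v)) : V₀) = ρ x ↑(π v) := by
        intro x v
        have hdec : ρ x v = ρ x ↑(π v) + ρ x (v - ↑(π v)) := by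
          rw [← map_add]; congr 1; abel
        have h1 : (↑(π (ρ x (↑(π v) : V₀))) : V₀) = ρ x ↑(π v) :=
          hπW _ (hWinv x _ (π v).2)
        have h2 : π (ρ x (v - ↑(π v))) = 0 := hπWJ _ (hWJinv x _ (hker v))
        rw [hdec, map_add, Submodule.coe_add, h1, h2, Submodule.coe_zero, add_zero]
      refine ⟨Sm, ?_, ?_, ?_⟩
      · ext v
        simp only [LinearMap.comp_apply, LinearMap.neg_apply]
        rw [hSapp (J v), hSapp v, hC v, map_sub, smul_sub, map_smul]
        module
      · intro v
        have hπS : π (Sm v) = π v := by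
          rw [hSapp v, map_sub, map_smul]
          rw [show (π (↑(π v) : V₀)) = π v from
            Submodule.projectionOnto_apply_left hcompl (π v)]
          rw [two_smul]; abel
        rw [hSapp (Sm v), hπS, hSapp v]
        abel
      · intro x
        ext v
        simp only [LinearMap.comp_apply]
        rw [hSapp (ρ x v), hSapp v, hπρ, map_sub, map_smul]
  · right
    rw [eq_top_iff, ← hM]
    exact inf_le_left

/-- In the irreducible case with a complex structure, there is no invariant real
structure. -/
lemma noS_of_irr [Nontrivial V₀] {ρ : g₀ →ₗ⁅ℝ⁆ Module.End ℝ V₀}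
    (hirr : ∀ W : Submodule ℝ V₀, (∀ x : g₀, ∀ v ∈ W, ρ x v ∈ W) → W = ⊥ ∨ W = ⊤)
    (J : V₀ →ₗ[ℝ] V₀) (hJ2 : J ∘ₗ J = -LinearMap.id) :
    ¬ ∃ S : V₀ →ₗ[ℝ] V₀, S ∘ₗ J = -(J ∘ₗ S) ∧ (∀ v, S (S v) = v) ∧
      ∀ x : g₀, S ∘ₗ ρ x = ρ x ∘ₗ S := by
  rintro ⟨S, h1, h2, h3⟩
  have hJJ : ∀ v : V₀, J (J v) = -v := by
    intro v
    have := LinearMap.ext_iff.mp hJ2 v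
    simpa using this
  have h1' : ∀ v : V₀, S (J v) = -J (S v) := by
    intro v
    have := LinearMap.ext_iff.mp h1 v
    simpa using this
  have h3' : ∀ (x : g₀) (v : V₀), S (ρ x v) = ρ x (S v) := by
    intro x v
    have := LinearMap.ext_iff.mp (h3 x) v
    simpa using this
  -- if S = id or S = -id then J = 0, contradicting J² = -1
  have hJne : ∃ v : V₀, J v ≠ 0 := by
    by_contra h
    push_neg at h
    obtain ⟨v, hv⟩ := exists_ne (0 : V₀)
    apply hv
    have := hJJ v
    rw [h (J v)] at this
    · exact (neg_eq_zero.mp this.symm)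
  have hSid : ¬ (∀ v : V₀, S v = v) := by
    intro h
    obtain ⟨v, hv⟩ := hJne
    apply hv
    have e := h1' v
    rw [h (J v), h v] at e
    have : (2 : ℝ) • J v = 0 := by rw [two_smul]; nth_rewrite 2 [e]; abel
    rcases smul_eq_zero.mp this with h' | h'
    · norm_num at h'
    · exact h'
  have hSneg : ¬ (∀ v : V₀, S v = -v) := by
    intro h
    obtain ⟨v, hv⟩ := hJne
    apply hv
    have e := h1' v
    rw [h (J v), h v, map_neg, neg_neg] at e
    have : (2 : ℝ) • J v = 0 := by rw [two_smul]; nth_rewrite 1 [← e]; abel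
    rcases smul_eq_zero.mp this with h' | h'
    · norm_num at h'
    · exact h'
  set Wp : Submodule ℝ V₀ := LinearMap.ker (S - LinearMap.id) with hWp
  have hWpmem : ∀ v : V₀, v ∈ Wp ↔ S v = v := by
    intro v
    rw [hWp, LinearMap.mem_ker, LinearMap.sub_apply, LinearMap.id_apply, sub_eq_zero]
  have hWpinv : ∀ x : g₀, ∀ v ∈ Wp, ρ x v ∈ Wp := by
    intro x v hv
    rw [hWpmem] at hv ⊢
    rw [h3', hv]
  rcases hirr Wp hWpinv with h | h
  · apply hSneg
    intro v
    have hmem : v + S v ∈ Wp := by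
      rw [hWpmem, map_add, h2]; abel
    rw [h, Submodule.mem_bot] at hmem
    have : S v = -v := by
      rw [← sub_eq_zero]; rw [← hmem]; abel
    exact this
  · apply hSid
    intro v
    have : v ∈ Wp := by rw [h]; trivial
    exact (hWpmem v).mp this

end Stmt3Aux

/-- For a finite-dimensional semisimple real Lie algebra `g₀` and a
nonzero finite-dimensional real representation `ρ` on `V₀`: if `ρ` is irreducible then
exactly one of conditions (1), (2) holds; conversely, if (1) or (2) holds then `ρ` is
irreducible. -/
theorem stmt3 {g₀ V₀ : Type*} [LieRing g₀] [LieAlgebra ℝ g₀]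
    [FiniteDimensional ℝ g₀] [LieAlgebra.IsSemisimple ℝ g₀]
    [AddCommGroup V₀] [Module ℝ V₀] [FiniteDimensional ℝ V₀] [Nontrivial V₀]
    (ρ : g₀ →ₗ⁅ℝ⁆ Module.End ℝ V₀) :
    (RealIrreducible ρ → Xor' (CondOne ρ) (CondTwo ρ)) ∧
    ((CondOne ρ ∨ CondTwo ρ) → RealIrreducible ρ) := by
  constructor
  · intro hirr
    have hirr' : ∀ W : Submodule ℝ V₀, (∀ x : g₀, ∀ v ∈ W, ρ x v ∈ W) → W = ⊥ ∨ W = ⊤ := hirr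
    by_cases hJ : ∃ J : V₀ →ₗ[ℝ] V₀, IsInvariantComplexStructure ρ J
    · refine Or.inr ⟨?_, fun hc1 => hc1.1 hJ⟩
      obtain ⟨J, hJ2, hJρ⟩ := hJ
      exact ⟨J, ⟨hJ2, hJρ⟩, fun W _ hinv => hirr' W hinv,
        Stmt3Aux.noS_of_irr hirr' J hJ2⟩
    · refine Or.inl ⟨⟨hJ, ?_, ?_⟩, ?_⟩
      · intro W hWinv
        rcases Stmt3Aux.key_lemma hirr' W hWinv with h | hex
        · exact h
        · exact absurd hex hJ
      · exact ⟨Stmt3Aux.Smap V₀, Stmt3Aux.Smap_smul, Stmt3Aux.Smap_Smap,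
          fun x v => Stmt3Aux.Smap_baseChange (ρ x) v⟩
      · intro hc2
        obtain ⟨J, hJi, _⟩ := hc2
        exact hJ ⟨J, hJi⟩
  · rintro (⟨_, hC, _⟩ | ⟨J, ⟨hJ2, hJρ⟩, hcplx, hnoS⟩)
    · exact fun W h => Stmt3Aux.real_irr_of_complex_irr hC W h
    · exact fun W h => Stmt3Aux.real_irr_of_J J hJ2 hJρ hcplx hnoS W h
end

section
/- Let τ ∈ ℂ with Im τ > 0, m ≥ 0, and ξ ∈ ℂ^m. Let (q_i, f_i) ∈ ℤ × ℤ^m for i in a finite index set F (charges of the left-moving fermions from vector and Fermi multiplets) and (p_j, g_j) ∈ ℤ × ℤ^m for j in a finite index set S (charges of the scalar multiplets), with p_j ≠ 0 for all j. Assume the anomaly cancellation conditions Σ_{i∈F} q_i² = Σ_{j∈S} p_j² and Σ_{i∈F} q_i·f_i = Σ_{j∈S} p_j·g_j (equality in ℤ^m). Define Z(u) = (∏_{i∈F} θ₁(τ | q_i·u + f_i·ξ)) / (∏_{j∈S} θ₁(τ | p_j·u + g_j·ξ)) for u ∈ ℂ such that θ₁(τ | p_j·u + g_j·ξ) ≠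 0 for all j ∈ S. Then for every such u, Z(u + 1) = (−1)^(Σ_{i∈F} q_i + Σ_{j∈S} p_j) · Z(u) and Z(u + τ) = (−1)^(Σ_{i∈F} q_i + Σ_{j∈S} p_j) · Z(u); i.e. the one-loop determinant is doubly periodic on the torus up to an overall sign. -/
open Complex

/-- The Jacobi theta function
`θ₁(τ|z) = −i·exp(πiτ/4)·exp(πiz)·∏_{n=1}^∞ (1−qⁿ)(1−y·qⁿ)(1−y⁻¹·q^{n−1})`,
with `q = exp(2πiτ)`, `y = exp(2πiz)`. -/
noncomputable def theta1 (τ z : ℂ) : ℂ :=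
  -I * exp ((Real.pi : ℂ) * I * τ / 4) * exp ((Real.pi : ℂ) * I * z) *
    ∏' n : ℕ,
      (1 - exp (2 * (Real.pi : ℂ) * I * τ) ^ (n + 1)) *
      (1 - exp (2 * (Real.pi : ℂ) * I * z) * exp (2 * (Real.pi : ℂ) * I * τ) ^ (n + 1)) *
      (1 - (exp (2 * (Real.pi : ℂ) * I * z))⁻¹ * exp (2 * (Real.pi : ℂ) * I * τ) ^ n)

/-- The one-loop determinant
`Z(u) = ∏_{i∈F} θ₁(τ | qᵢ u + fᵢ·ξ) / ∏_{j∈S} θ₁(τ | pⱼ u + gⱼ·ξ)`. -/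
noncomputable def Zoneloop {F S : Type*} [Fintype F] [Fintype S] {m : ℕ}
    (τ : ℂ) (ξ : Fin m → ℂ) (q : F → ℤ) (f : F → Fin m → ℤ)
    (p : S → ℤ) (g : S → Fin m → ℤ) (u : ℂ) : ℂ :=
  (∏ i : F, theta1 τ ((q i : ℂ) * u + ∑ k : Fin m, (f i k : ℂ) * ξ k)) /
    (∏ j : S, theta1 τ ((p j : ℂ) * u + ∑ k : Fin m, (g j k : ℂ) * ξ k))

private lemma hasProd_zero_of_eq_zero {f : ℕ → ℂ} {k : ℕ} (h : f k = 0) : HasProd f 0 := by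
  have he : ∀ᶠ s : Finset ℕ in Filter.atTop, ∏ i ∈ s, f i = 0 := by
    filter_upwards [Filter.eventually_ge_atTop ({k} : Finset ℕ)] with s hs
    exact Finset.prod_eq_zero (hs (Finset.mem_singleton_self k)) h
  exact Filter.Tendsto.congr' (he.mono fun s hs => hs.symm) tendsto_const_nhds

private lemma mult_one_sub (c : ℂ) {r : ℂ} (hr : ‖r‖ < 1) :
    Multipliable (fun n : ℕ => 1 - c * r ^ n) := by
  by_cases h : ∀ n : ℕ, 1 - c * r ^ n ≠ 0
  · refine Complex.multipliable_of_summable_log (f := fun n => 1 - c * r ^ n) ?_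
    have hgeo : Summable (fun n : ℕ => (3/2 : ℝ) * (‖c‖ * ‖r‖ ^ n)) :=
      (((summable_geometric_of_lt_one (norm_nonneg r) hr).mul_left ‖c‖).mul_left (3/2))
    refine Summable.of_norm_bounded_eventually_nat hgeo ?_
    have h0 : Filter.Tendsto (fun n : ℕ => ‖c‖ * ‖r‖ ^ n) Filter.atTop (nhds 0) := by
      simpa using (tendsto_pow_atTop_nhds_zero_of_lt_one (norm_nonneg r) hr).const_mul ‖c‖
    filter_upwards [h0.eventually_le_const (by norm_num : (0:ℝ) < 1/2)] with n hn
    have hnorm : ‖-(c * r ^ n)‖ = ‖c‖ * ‖r‖ ^ n := by rw [norm_neg, norm_mul, norm_pow]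
    have hb := Complex.norm_log_one_add_half_le_self (z := -(c * r ^ n)) (by rw [hnorm]; exact hn)
    calc ‖Complex.log (1 - c * r ^ n)‖ = ‖Complex.log (1 + -(c * r ^ n))‖ := by
          rw [sub_eq_add_neg]
      _ ≤ (3/2) * ‖-(c * r ^ n)‖ := hb
      _ = (3/2) * (‖c‖ * ‖r‖ ^ n) := by rw [hnorm]
  · push_neg at h
    obtain ⟨n, hn⟩ := h
    exact ⟨0, hasProd_zero_of_eq_zero hn⟩

private lemma norm_q_lt_one {τ : ℂ} (hτ : 0 < τ.im) : ‖exp (2 * (Real.pi : ℂ) * I * τ)‖ < 1 := by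
  rw [Complex.norm_exp, Real.exp_lt_one_iff]
  have h : (2 * (Real.pi : ℂ) * I * τ).re = -(2 * Real.pi * τ.im) := by
    simp [Complex.mul_re, Complex.mul_im]
  rw [h]
  have := Real.pi_pos
  nlinarith

private lemma theta1_add_tau {τ : ℂ} (hτ : 0 < τ.im) (z : ℂ) :
    theta1 τ (z + τ) =
      -(exp ((Real.pi : ℂ) * I * τ))⁻¹ * (exp (2 * (Real.pi : ℂ) * I * z))⁻¹ * theta1 τ z := by
  have hQ : ‖exp (2 * (Real.pi : ℂ) * I * τ)‖ < 1 := norm_q_lt_one hτ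
  set Q : ℂ := exp (2 * (Real.pi : ℂ) * I * τ) with hQdef
  set Y : ℂ := exp (2 * (Real.pi : ℂ) * I * z) with hYdef
  have hQ0 : Q ≠ 0 := Complex.exp_ne_zero _
  have hY0 : Y ≠ 0 := Complex.exp_ne_zero _
  have hE0 : exp ((Real.pi : ℂ) * I * τ) ≠ 0 := Complex.exp_ne_zero _
  have hQE : Q = exp ((Real.pi : ℂ) * I * τ) ^ 2 := by
    rw [hQdef, show 2 * (Real.pi : ℂ) * I * τ = (Real.pi : ℂ) * I * τ + (Real.pi : ℂ) * I * τ
      by ring, exp_add, sq]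
  have h2 : exp (2 * (Real.pi : ℂ) * I * (z + τ)) = Y * Q := by
    rw [show 2 * (Real.pi : ℂ) * I * (z + τ) =
      2 * (Real.pi : ℂ) * I * z + 2 * (Real.pi : ℂ) * I * τ by ring, exp_add]
  have h1 : exp ((Real.pi : ℂ) * I * (z + τ)) =
      exp ((Real.pi : ℂ) * I * z) * exp ((Real.pi : ℂ) * I * τ) := by
    rw [show (Real.pi : ℂ) * I * (z + τ) = (Real.pi : ℂ) * I * z + (Real.pi : ℂ) * I * τ
      by ring, exp_add]
  -- multipliability
  have hA : Multipliable (fun n : ℕ => 1 - Q ^ (n + 1)) :=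
    (mult_one_sub Q hQ).congr (fun n => by ring)
  have hB : Multipliable (fun n : ℕ => 1 - Y * Q * Q ^ n) := by
    have := mult_one_sub (Y * Q) hQ
    exact this.congr (fun n => by ring)
  have hBs : Multipliable (fun n : ℕ => 1 - Y * Q * Q ^ (n + 1)) :=
    (mult_one_sub (Y * Q * Q) hQ).congr (fun n => by ring)
  have hC : Multipliable (fun n : ℕ => 1 - Y⁻¹ * Q ^ n) := mult_one_sub _ hQ
  have hC' : Multipliable (fun n : ℕ => 1 - (Y * Q)⁻¹ * Q ^ n) := mult_one_sub _ hQ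
  have hC's : Multipliable (fun n : ℕ => 1 - (Y * Q)⁻¹ * Q ^ (n + 1)) :=
    (mult_one_sub ((Y * Q)⁻¹ * Q) hQ).congr (fun n => by ring)
  have key : (∏' n : ℕ, (1 - Q ^ (n + 1)) * (1 - (Y * Q) * Q ^ (n + 1)) *
        (1 - (Y * Q)⁻¹ * Q ^ n))
      = -(Y * Q)⁻¹ * ∏' n : ℕ, (1 - Q ^ (n + 1)) * (1 - Y * Q ^ (n + 1)) * (1 - Y⁻¹ * Q ^ n) := by
    have hL : (∏' n : ℕ, (1 - Q ^ (n + 1)) * (1 - (Y * Q) * Q ^ (n + 1)) *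
          (1 - (Y * Q)⁻¹ * Q ^ n))
        = (∏' n : ℕ, (1 - Q ^ (n + 1))) * (∏' n : ℕ, (1 - Y * Q * Q ^ (n + 1))) *
          (∏' n : ℕ, (1 - (Y * Q)⁻¹ * Q ^ n)) := by
      rw [Multipliable.tprod_mul (f := fun n : ℕ => (1 - Q ^ (n + 1)) * (1 - Y * Q * Q ^ (n + 1)))
        (g := fun n : ℕ => 1 - (Y * Q)⁻¹ * Q ^ n) (hA.mul hBs) hC',
        Multipliable.tprod_mul (f := fun n : ℕ => 1 - Q ^ (n + 1))
        (g := fun n : ℕ => 1 - Y * Q * Q ^ (n + 1)) hA hBs]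
    have hR : (∏' n : ℕ, (1 - Q ^ (n + 1)) * (1 - Y * Q ^ (n + 1)) * (1 - Y⁻¹ * Q ^ n))
        = (∏' n : ℕ, (1 - Q ^ (n + 1))) * (∏' n : ℕ, (1 - Y * Q * Q ^ n)) *
          (∏' n : ℕ, (1 - Y⁻¹ * Q ^ n)) := by
      rw [show (fun n : ℕ => (1 - Q ^ (n + 1)) * (1 - Y * Q ^ (n + 1)) * (1 - Y⁻¹ * Q ^ n))
        = fun n : ℕ => (1 - Q ^ (n + 1)) * (1 - Y * Q * Q ^ n) * (1 - Y⁻¹ * Q ^ n)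
        from funext fun n => by ring]
      rw [Multipliable.tprod_mul (f := fun n : ℕ => (1 - Q ^ (n + 1)) * (1 - Y * Q * Q ^ n))
        (g := fun n : ℕ => 1 - Y⁻¹ * Q ^ n) (hA.mul hB) hC,
        Multipliable.tprod_mul (f := fun n : ℕ => 1 - Q ^ (n + 1))
        (g := fun n : ℕ => 1 - Y * Q * Q ^ n) hA hB]
    have hCshift : (∏' n : ℕ, (1 - (Y * Q)⁻¹ * Q ^ n))
        = (1 - (Y * Q)⁻¹) * ∏' n : ℕ, (1 - Y⁻¹ * Q ^ n) := by
      rw [tprod_eq_zero_mul' (f := fun n : ℕ => 1 - (Y * Q)⁻¹ * Q ^ n) hC's]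
      congr 1
      · simp
      · apply tprod_congr
        intro n
        have h : (Y * Q)⁻¹ * Q ^ (n + 1) = Y⁻¹ * Q ^ n := by
          field_simp
          ring
        rw [h]
    have hBshift : (1 - Y * Q) * (∏' n : ℕ, (1 - Y * Q * Q ^ (n + 1)))
        = ∏' n : ℕ, (1 - Y * Q * Q ^ n) := by
      have h := tprod_eq_zero_mul' (f := fun n : ℕ => 1 - Y * Q * Q ^ n) hBs
      rw [h]
      norm_num
    have hC0 : (1 - (Y * Q)⁻¹) = -(Y * Q)⁻¹ * (1 - Y * Q) := by
      field_simp
      ring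
    rw [hL, hR, hCshift, hC0, ← hBshift]
    ring
  unfold theta1
  rw [h1, h2, key]
  have hEQ : exp ((Real.pi : ℂ) * I * τ) * (Y * Q)⁻¹ =
      (exp ((Real.pi : ℂ) * I * τ))⁻¹ * Y⁻¹ := by
    rw [hQE]
    field_simp
  calc -I * exp ((Real.pi : ℂ) * I * τ / 4) *
        (exp ((Real.pi : ℂ) * I * z) * exp ((Real.pi : ℂ) * I * τ)) *
        (-(Y * Q)⁻¹ * ∏' n : ℕ, (1 - Q ^ (n + 1)) * (1 - Y * Q ^ (n + 1)) * (1 - Y⁻¹ * Q ^ n))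
      = -(exp ((Real.pi : ℂ) * I * τ) * (Y * Q)⁻¹) *
        (-I * exp ((Real.pi : ℂ) * I * τ / 4) * exp ((Real.pi : ℂ) * I * z) *
          ∏' n : ℕ, (1 - Q ^ (n + 1)) * (1 - Y * Q ^ (n + 1)) * (1 - Y⁻¹ * Q ^ n)) := by ring
    _ = _ := by rw [hEQ]; ring

private lemma theta1_add_one (τ z : ℂ) : theta1 τ (z + 1) = -theta1 τ z := by
  have h1 : exp ((Real.pi : ℂ) * I * (z + 1)) = -exp ((Real.pi : ℂ) * I * z) := by
    rw [show (Real.pi : ℂ) * I * (z + 1) = (Real.pi : ℂ) * I * z + (Real.pi : ℂ) * I by ring,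
      exp_add, exp_pi_mul_I, mul_neg_one]
  have h2 : exp (2 * (Real.pi : ℂ) * I * (z + 1)) = exp (2 * (Real.pi : ℂ) * I * z) := by
    rw [show 2 * (Real.pi : ℂ) * I * (z + 1) = 2 * (Real.pi : ℂ) * I * z + 2 * (Real.pi : ℂ) * I
      by ring, exp_add, exp_two_pi_mul_I, mul_one]
  unfold theta1
  rw [h1, h2]
  ring

private lemma theta1_add_int (τ z : ℂ) (n : ℤ) :
    theta1 τ (z + (n : ℂ)) = (-1 : ℂ) ^ n * theta1 τ z := by
  induction n using Int.induction_on with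
  | zero => simp
  | succ k ih =>
    rw [show z + (((k : ℤ) + 1 : ℤ) : ℂ) = (z + ((k : ℤ) : ℂ)) + 1 by push_cast; ring,
      theta1_add_one, ih, zpow_add₀ (by norm_num : (-1:ℂ) ≠ 0), zpow_one]
    ring
  | pred k ih =>
    have h := theta1_add_one τ (z + ((-(k : ℤ) - 1 : ℤ) : ℂ))
    rw [show z + ((-(k : ℤ) - 1 : ℤ) : ℂ) + 1 = z + ((-(k : ℤ) : ℤ) : ℂ) by push_cast; ring,
      ih] at h
    have hs : ((-1 : ℂ)) ^ (-(k : ℤ) - 1) = -(-1 : ℂ) ^ (-(k : ℤ)) := by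
      rw [zpow_sub₀ (by norm_num : (-1:ℂ) ≠ 0), zpow_one]
      ring
    rw [hs]
    linear_combination h

private lemma theta1_add_int_mul_tau {τ : ℂ} (hτ : 0 < τ.im) (z : ℂ) (n : ℤ) :
    theta1 τ (z + (n : ℂ) * τ) =
      (-1 : ℂ) ^ n *
        exp (-(n : ℂ) ^ 2 * ((Real.pi : ℂ) * I * τ) - (n : ℂ) * (2 * (Real.pi : ℂ) * I * z)) *
        theta1 τ z := by
  induction n using Int.induction_on with
  | zero => simp
  | succ k ih =>
    rw [show z + (((k : ℤ) + 1 : ℤ) : ℂ) * τ = (z + ((k : ℤ) : ℂ) * τ) + τ by push_cast; ring,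
      theta1_add_tau hτ, ih, ← exp_neg, ← exp_neg]
    have hcomb : exp (-((((k : ℤ) + 1 : ℤ)) : ℂ) ^ 2 * ((Real.pi : ℂ) * I * τ) -
          ((((k : ℤ) + 1 : ℤ)) : ℂ) * (2 * (Real.pi : ℂ) * I * z))
        = exp (-((Real.pi : ℂ) * I * τ)) *
          exp (-(2 * (Real.pi : ℂ) * I * (z + ((k : ℤ) : ℂ) * τ))) *
          exp (-((k : ℤ) : ℂ) ^ 2 * ((Real.pi : ℂ) * I * τ) -
            ((k : ℤ) : ℂ) * (2 * (Real.pi : ℂ) * I * z)) := by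
      rw [← exp_add, ← exp_add]
      congr 1
      push_cast
      ring
    rw [hcomb, show ((-1 : ℂ)) ^ ((k : ℤ) + 1) = (-1 : ℂ) ^ (k : ℤ) * (-1) from by
      rw [zpow_add₀ (by norm_num : (-1:ℂ) ≠ 0), zpow_one]]
    ring
  | pred k ih =>
    have h := theta1_add_tau hτ (z + ((-(k : ℤ) - 1 : ℤ) : ℂ) * τ)
    rw [show z + ((-(k : ℤ) - 1 : ℤ) : ℂ) * τ + τ = z + ((-(k : ℤ) : ℤ) : ℂ) * τ by
      push_cast; ring, ih, ← exp_neg, ← exp_neg] at h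
    -- h : (-1)^(-k) * exp Sk * θ z = -(exp (-(πIτ)) * exp (-(2πI(z + (-k-1)τ))) * θ arg)  (assoc?)
    have c1 : exp ((Real.pi : ℂ) * I * τ) * exp (-((Real.pi : ℂ) * I * τ)) = 1 := by
      rw [← exp_add]; simp
    have c2 : exp (2 * (Real.pi : ℂ) * I * (z + ((-(k : ℤ) - 1 : ℤ) : ℂ) * τ)) *
        exp (-(2 * (Real.pi : ℂ) * I * (z + ((-(k : ℤ) - 1 : ℤ) : ℂ) * τ))) = 1 := by
      rw [← exp_add]; simp
    have hθ : theta1 τ (z + ((-(k : ℤ) - 1 : ℤ) : ℂ) * τ)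
        = -exp ((Real.pi : ℂ) * I * τ) *
          exp (2 * (Real.pi : ℂ) * I * (z + ((-(k : ℤ) - 1 : ℤ) : ℂ) * τ)) *
          ((-1 : ℂ) ^ (-(k:ℤ)) *
            exp (-((-(k : ℤ) : ℤ) : ℂ) ^ 2 * ((Real.pi : ℂ) * I * τ) -
              ((-(k : ℤ) : ℤ) : ℂ) * (2 * (Real.pi : ℂ) * I * z)) * theta1 τ z) := by
      linear_combination (exp ((Real.pi : ℂ) * I * τ) *
          exp (2 * (Real.pi : ℂ) * I * (z + ((-(k : ℤ) - 1 : ℤ) : ℂ) * τ))) * h -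
        (theta1 τ (z + ((-(k : ℤ) - 1 : ℤ) : ℂ) * τ) *
          exp (2 * (Real.pi : ℂ) * I * (z + ((-(k : ℤ) - 1 : ℤ) : ℂ) * τ)) *
          exp (-(2 * (Real.pi : ℂ) * I * (z + ((-(k : ℤ) - 1 : ℤ) : ℂ) * τ)))) * c1 -
        theta1 τ (z + ((-(k : ℤ) - 1 : ℤ) : ℂ) * τ) * c2
    rw [hθ]
    have hcomb : exp (-((-(k : ℤ) - 1 : ℤ) : ℂ) ^ 2 * ((Real.pi : ℂ) * I * τ) -
          ((-(k : ℤ) - 1 : ℤ) : ℂ) * (2 * (Real.pi : ℂ) * I * z))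
        = exp ((Real.pi : ℂ) * I * τ) *
          exp (2 * (Real.pi : ℂ) * I * (z + ((-(k : ℤ) - 1 : ℤ) : ℂ) * τ)) *
          exp (-((-(k : ℤ) : ℤ) : ℂ) ^ 2 * ((Real.pi : ℂ) * I * τ) -
            ((-(k : ℤ) : ℤ) : ℂ) * (2 * (Real.pi : ℂ) * I * z)) := by
      rw [← exp_add, ← exp_add]
      congr 1
      push_cast
      ring
    rw [hcomb, show ((-1 : ℂ)) ^ (-(k : ℤ) - 1) = (-1 : ℂ) ^ (-(k : ℤ)) * (-1) from by
      rw [zpow_sub₀ (by norm_num : (-1:ℂ) ≠ 0), zpow_one]; ring]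
    ring

private lemma zpow_sum' {ι : Type*} (s : Finset ι) (e : ι → ℤ) {x : ℂ} (hx : x ≠ 0) :
    x ^ (∑ i ∈ s, e i) = ∏ i ∈ s, x ^ e i := by
  induction s using Finset.cons_induction with
  | empty => simp
  | cons a s ha ih => rw [Finset.sum_cons, Finset.prod_cons, zpow_add₀ hx, ih]

private lemma sign_div (a b : ℤ) : ((-1 : ℂ)) ^ a / (-1 : ℂ) ^ b = (-1 : ℂ) ^ (a + b) := by
  have h0 : (-1 : ℂ) ≠ 0 := by norm_num
  have h2 : ((-1 : ℂ)) ^ (2 * b) = 1 := by rw [zpow_mul]; norm_num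
  rw [div_eq_mul_inv, ← zpow_neg, ← zpow_add₀ h0,
    show a + b = a + -b + 2 * b by ring, zpow_add₀ h0 (a + -b) (2 * b), h2, mul_one]

private lemma sum_quad {ι : Type*} [Fintype ι] {m : ℕ} (ξ : Fin m → ℂ) (u w v : ℂ)
    (a : ι → ℤ) (b : ι → Fin m → ℤ) :
    ∑ i : ι, (-((a i : ℤ) : ℂ) ^ 2 * w -
        ((a i : ℤ) : ℂ) * (v * (((a i : ℤ) : ℂ) * u + ∑ k : Fin m, ((b i k : ℤ) : ℂ) * ξ k)))
      = -(w + v * u) * ((∑ i : ι, (a i) ^ 2 : ℤ) : ℂ)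
        - ∑ k : Fin m, v * ((∑ i : ι, a i * b i k : ℤ) : ℂ) * ξ k := by
  push_cast
  have step : ∀ i : ι, -((a i : ℤ) : ℂ) ^ 2 * w -
        ((a i : ℤ) : ℂ) * (v * (((a i : ℤ) : ℂ) * u + ∑ k : Fin m, ((b i k : ℤ) : ℂ) * ξ k))
      = -(w + v * u) * ((a i : ℤ) : ℂ) ^ 2 -
        ∑ k : Fin m, v * (((a i : ℤ) : ℂ) * ((b i k : ℤ) : ℂ)) * ξ k := by
    intro i
    have hms : ((a i : ℤ) : ℂ) * (v * ∑ k : Fin m, ((b i k : ℤ) : ℂ) * ξ k)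
        = ∑ k : Fin m, v * (((a i : ℤ) : ℂ) * ((b i k : ℤ) : ℂ)) * ξ k := by
      rw [Finset.mul_sum, Finset.mul_sum]
      exact Finset.sum_congr rfl fun k _ => by ring
    calc -((a i : ℤ) : ℂ) ^ 2 * w -
          ((a i : ℤ) : ℂ) * (v * (((a i : ℤ) : ℂ) * u + ∑ k : Fin m, ((b i k : ℤ) : ℂ) * ξ k))
        = -(w + v * u) * ((a i : ℤ) : ℂ) ^ 2 -
          ((a i : ℤ) : ℂ) * (v * ∑ k : Fin m, ((b i k : ℤ) : ℂ) * ξ k) := by ring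
      _ = _ := by rw [hms]
  rw [Finset.sum_congr rfl fun i _ => step i, Finset.sum_sub_distrib, ← Finset.mul_sum,
    Finset.sum_comm]
  congr 1
  refine Finset.sum_congr rfl fun k _ => ?_
  rw [Finset.mul_sum, Finset.sum_mul]

/-- Under the anomaly cancellation conditions
`Σ qᵢ² = Σ pⱼ²` and `Σ qᵢ fᵢ = Σ pⱼ gⱼ`, the one-loop determinant is doubly periodic
in `u` up to the overall sign `(−1)^(Σ qᵢ + Σ pⱼ)`. -/
theorem stmt9 {F S : Type*} [Fintype F] [Fintype S] {m : ℕ}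
    (τ : ℂ) (hτ : 0 < τ.im) (ξ : Fin m → ℂ)
    (q : F → ℤ) (f : F → Fin m → ℤ) (p : S → ℤ) (g : S → Fin m → ℤ)
    (hp : ∀ j : S, p j ≠ 0)
    (hanom1 : ∑ i : F, (q i) ^ 2 = ∑ j : S, (p j) ^ 2)
    (hanom2 : ∀ k : Fin m, ∑ i : F, q i * f i k = ∑ j : S, p j * g j k)
    (u : ℂ)
    (hu : ∀ j : S, theta1 τ ((p j : ℂ) * u + ∑ k : Fin m, (g j k : ℂ) * ξ k) ≠ 0) :
    Zoneloop τ ξ q f p g (u + 1) =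
      (-1 : ℂ) ^ (∑ i : F, q i + ∑ j : S, p j) * Zoneloop τ ξ q f p g u ∧
    Zoneloop τ ξ q f p g (u + τ) =
      (-1 : ℂ) ^ (∑ i : F, q i + ∑ j : S, p j) * Zoneloop τ ξ q f p g u := by
  have h0 : (-1 : ℂ) ≠ 0 := by norm_num
  constructor
  · unfold Zoneloop
    have hnum : ∏ i : F, theta1 τ ((q i : ℂ) * (u + 1) + ∑ k : Fin m, (f i k : ℂ) * ξ k)
        = (-1 : ℂ) ^ (∑ i : F, q i) *
          ∏ i : F, theta1 τ ((q i : ℂ) * u + ∑ k : Fin m, (f i k : ℂ) * ξ k) := by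
      rw [zpow_sum' Finset.univ q h0, ← Finset.prod_mul_distrib]
      refine Finset.prod_congr rfl fun i _ => ?_
      rw [show (q i : ℂ) * (u + 1) + ∑ k : Fin m, (f i k : ℂ) * ξ k
        = ((q i : ℂ) * u + ∑ k : Fin m, (f i k : ℂ) * ξ k) + ((q i : ℤ) : ℂ) by push_cast; ring,
        theta1_add_int]
    have hden : ∏ j : S, theta1 τ ((p j : ℂ) * (u + 1) + ∑ k : Fin m, (g j k : ℂ) * ξ k)
        = (-1 : ℂ) ^ (∑ j : S, p j) *
          ∏ j : S, theta1 τ ((p j : ℂ) * u + ∑ k : Fin m, (g j k : ℂ) * ξ k) := by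
      rw [zpow_sum' Finset.univ p h0, ← Finset.prod_mul_distrib]
      refine Finset.prod_congr rfl fun j _ => ?_
      rw [show (p j : ℂ) * (u + 1) + ∑ k : Fin m, (g j k : ℂ) * ξ k
        = ((p j : ℂ) * u + ∑ k : Fin m, (g j k : ℂ) * ξ k) + ((p j : ℤ) : ℂ) by push_cast; ring,
        theta1_add_int]
    rw [hnum, hden, mul_div_mul_comm, sign_div]
  · unfold Zoneloop
    have hnum : ∏ i : F, theta1 τ ((q i : ℂ) * (u + τ) + ∑ k : Fin m, (f i k : ℂ) * ξ k)
        = (-1 : ℂ) ^ (∑ i : F, q i) *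
          exp (∑ i : F, (-((q i : ℤ) : ℂ) ^ 2 * ((Real.pi : ℂ) * I * τ) -
            ((q i : ℤ) : ℂ) * (2 * (Real.pi : ℂ) * I *
              (((q i : ℤ) : ℂ) * u + ∑ k : Fin m, ((f i k : ℤ) : ℂ) * ξ k)))) *
          ∏ i : F, theta1 τ ((q i : ℂ) * u + ∑ k : Fin m, (f i k : ℂ) * ξ k) := by
      rw [zpow_sum' Finset.univ q h0, exp_sum, ← Finset.prod_mul_distrib,
        ← Finset.prod_mul_distrib]
      refine Finset.prod_congr rfl fun i _ => ?_
      rw [show (q i : ℂ) * (u + τ) + ∑ k : Fin m, (f i k : ℂ) * ξ k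
        = ((q i : ℂ) * u + ∑ k : Fin m, (f i k : ℂ) * ξ k) + ((q i : ℤ) : ℂ) * τ by
          push_cast; ring,
        theta1_add_int_mul_tau hτ]
    have hden : ∏ j : S, theta1 τ ((p j : ℂ) * (u + τ) + ∑ k : Fin m, (g j k : ℂ) * ξ k)
        = (-1 : ℂ) ^ (∑ j : S, p j) *
          exp (∑ j : S, (-((p j : ℤ) : ℂ) ^ 2 * ((Real.pi : ℂ) * I * τ) -
            ((p j : ℤ) : ℂ) * (2 * (Real.pi : ℂ) * I *
              (((p j : ℤ) : ℂ) * u + ∑ k : Fin m, ((g j k : ℤ) : ℂ) * ξ k)))) *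
          ∏ j : S, theta1 τ ((p j : ℂ) * u + ∑ k : Fin m, (g j k : ℂ) * ξ k) := by
      rw [zpow_sum' Finset.univ p h0, exp_sum, ← Finset.prod_mul_distrib,
        ← Finset.prod_mul_distrib]
      refine Finset.prod_congr rfl fun j _ => ?_
      rw [show (p j : ℂ) * (u + τ) + ∑ k : Fin m, (g j k : ℂ) * ξ k
        = ((p j : ℂ) * u + ∑ k : Fin m, (g j k : ℂ) * ξ k) + ((p j : ℤ) : ℂ) * τ by
          push_cast; ring,
        theta1_add_int_mul_tau hτ]
    have hW : (∑ i : F, (-((q i : ℤ) : ℂ) ^ 2 * ((Real.pi : ℂ) * I * τ) -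
            ((q i : ℤ) : ℂ) * (2 * (Real.pi : ℂ) * I *
              (((q i : ℤ) : ℂ) * u + ∑ k : Fin m, ((f i k : ℤ) : ℂ) * ξ k))))
        = (∑ j : S, (-((p j : ℤ) : ℂ) ^ 2 * ((Real.pi : ℂ) * I * τ) -
            ((p j : ℤ) : ℂ) * (2 * (Real.pi : ℂ) * I *
              (((p j : ℤ) : ℂ) * u + ∑ k : Fin m, ((g j k : ℤ) : ℂ) * ξ k)))) := by
      rw [sum_quad ξ u ((Real.pi : ℂ) * I * τ) (2 * (Real.pi : ℂ) * I) q f,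
        sum_quad ξ u ((Real.pi : ℂ) * I * τ) (2 * (Real.pi : ℂ) * I) p g, hanom1]
      congr 1
      exact Finset.sum_congr rfl fun k _ => by rw [hanom2 k]
    rw [hnum, hden, hW, mul_div_mul_comm, mul_div_mul_comm, div_self (Complex.exp_ne_zero _),
      mul_one, sign_div]
end
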